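/- For every natural number k, every function f : ℝ → ℝ of class C^k, and every x ∈ ℝ, the k-th derivative of the composite x ↦ f(x²) satisfies d^k/dx^k f(x²) = Σ_{j=0}^{⌊k/2⌋} (k! / (j! · (k−2j)!)) · (2x)^{k−2j} · f^{(k−j)}(x²), where f^{(k−j)} denotes the (k−j)-th derivative of f. -/

import Mathlib

private lemma coeff_id (j d : ℕ) :
    ((2*j+d+3).factorial : ℝ) / ((j+1).factorial * (d+1).factorial)
    = ((2*j+d+2).factorial : ℝ) / ((j+1).factorial * d.factorial)
      + 2*((d:ℝ)+2) * (((2*j+d+2).factorial : ℝ) / (j.factorial * (d+2).factorial)) := by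
  have h1 : (2*j+d+3).factorial = (2*j+d+3) * (2*j+d+2).factorial := Nat.factorial_succ _
  have h2 : (d+1).factorial = (d+1) * d.factorial := Nat.factorial_succ _
  have h3 : (d+2).factorial = (d+2) * (d+1).factorial := Nat.factorial_succ _
  have h4 : (j+1).factorial = (j+1) * j.factorial := Nat.factorial_succ _
  have n1 : (j.factorial : ℝ) ≠ 0 := Nat.cast_ne_zero.mpr (Nat.factorial_ne_zero _)
  have n2 : (d.factorial : ℝ) ≠ 0 := Nat.cast_ne_zero.mpr (Nat.factorial_ne_zero _)
  rw [h1, h3, h2, h4]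
  push_cast
  field_simp
  ring

private lemma coeff_id2 (m : ℕ) :
    ((2*m+2).factorial : ℝ) / ((m+1).factorial)
    = 2 * ((2*m+1).factorial : ℝ) / (m.factorial) := by
  have h1 : (2*m+2).factorial = (2*m+2) * (2*m+1).factorial := Nat.factorial_succ _
  have h4 : (m+1).factorial = (m+1) * m.factorial := Nat.factorial_succ _
  have n1 : (m.factorial : ℝ) ≠ 0 := Nat.cast_ne_zero.mpr (Nat.factorial_ne_zero _)
  rw [h1, h4]
  push_cast
  field_simp

private noncomputable def Pt (k : ℕ) (x : ℝ) (F : ℕ → ℝ) (j : ℕ) : ℝ :=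
  ((k.factorial : ℝ) / ((j.factorial : ℝ) * ((k - 2 * j).factorial : ℝ))) *
    (2 * x) ^ (k - 2 * j + 1) * F (k - j + 1)

private noncomputable def Qt (k : ℕ) (x : ℝ) (F : ℕ → ℝ) (j : ℕ) : ℝ :=
  2 * ((k - 2 * j : ℕ) : ℝ) *
    ((k.factorial : ℝ) / ((j.factorial : ℝ) * ((k - 2 * j).factorial : ℝ))) *
    (2 * x) ^ (k - 2 * j - 1) * F (k - j)

private noncomputable def Tt (k : ℕ) (x : ℝ) (F : ℕ → ℝ) (j : ℕ) : ℝ :=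
  (((k + 1).factorial : ℝ) / ((j.factorial : ℝ) * ((k + 1 - 2 * j).factorial : ℝ))) *
    (2 * x) ^ (k + 1 - 2 * j) * F (k + 1 - j)

private lemma step_id (k : ℕ) (x : ℝ) (F : ℕ → ℝ) (j d : ℕ) (hd : k = 2*j+2+d) :
    Tt k x F (j+1) = Pt k x F (j+1) + Qt k x F j := by
  subst hd
  unfold Tt Pt Qt
  rw [show 2*j+2+d+1-2*(j+1) = d+1 by omega, show 2*j+2+d+1-(j+1) = j+2+d by omega,
      show 2*j+2+d-2*(j+1) = d by omega,
      show 2*j+2+d-(j+1)+1 = j+2+d by omega,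
      show 2*j+2+d-2*j-1 = d+1 by omega, show 2*j+2+d-2*j = d+2 by omega,
      show 2*j+2+d-j = j+2+d by omega,
      show 2*j+2+d+1 = 2*j+d+3 by omega, show 2*j+2+d = 2*j+d+2 by omega]
  push_cast
  linear_combination (coeff_id j d) * ((2*x)^(d+1) * F (j+2+d))

private lemma zero_id (k : ℕ) (x : ℝ) (F : ℕ → ℝ) : Pt k x F 0 = Tt k x F 0 := by
  unfold Pt Tt
  have n1 : (k.factorial : ℝ) ≠ 0 := Nat.cast_ne_zero.mpr (Nat.factorial_ne_zero _)
  have n2 : ((k+1).factorial : ℝ) ≠ 0 := Nat.cast_ne_zero.mpr (Nat.factorial_ne_zero _)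
  simp [div_self, n1, n2]

private lemma sum_identity (k : ℕ) (x : ℝ) (F : ℕ → ℝ) :
    (∑ j ∈ Finset.range (k / 2 + 1),
      ((k.factorial : ℝ) / ((j.factorial : ℝ) * ((k - 2 * j).factorial : ℝ))) *
        ((((k - 2 * j : ℕ) : ℝ) * (2 * x) ^ (k - 2 * j - 1) * 2) * F (k - j) +
          (2 * x) ^ (k - 2 * j) * (F (k - j + 1) * (2 * x))))
    = ∑ j ∈ Finset.range ((k + 1) / 2 + 1),
      (((k + 1).factorial : ℝ) / ((j.factorial : ℝ) * ((k + 1 - 2 * j).factorial : ℝ))) *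
        (2 * x) ^ (k + 1 - 2 * j) * F (k + 1 - j) := by
  have hsplit : (∑ j ∈ Finset.range (k / 2 + 1),
      ((k.factorial : ℝ) / ((j.factorial : ℝ) * ((k - 2 * j).factorial : ℝ))) *
        ((((k - 2 * j : ℕ) : ℝ) * (2 * x) ^ (k - 2 * j - 1) * 2) * F (k - j) +
          (2 * x) ^ (k - 2 * j) * (F (k - j + 1) * (2 * x))))
      = (∑ j ∈ Finset.range (k / 2 + 1), Pt k x F j)
        + ∑ j ∈ Finset.range (k / 2 + 1), Qt k x F j := by
    rw [← Finset.sum_add_distrib]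
    refine Finset.sum_congr rfl fun j hj => ?_
    unfold Pt Qt
    rw [pow_succ]
    ring
  rw [hsplit]
  have hT : ∀ n, (∑ j ∈ Finset.range n,
      (((k + 1).factorial : ℝ) / ((j.factorial : ℝ) * ((k + 1 - 2 * j).factorial : ℝ))) *
        (2 * x) ^ (k + 1 - 2 * j) * F (k + 1 - j)) = ∑ j ∈ Finset.range n, Tt k x F j :=
    fun n => rfl
  rw [hT]
  rcases Nat.even_or_odd k with ⟨m, hm⟩ | ⟨m, hm⟩
  · -- k = m + m
    subst hm
    rw [show (m + m) / 2 = m by omega, show (m + m + 1) / 2 = m by omega]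
    rw [Finset.sum_range_succ (fun j => Qt (m+m) x F j) m]
    rw [show Qt (m+m) x F m = 0 by
      unfold Qt; rw [show m+m-2*m = 0 by omega]; push_cast; ring]
    rw [add_zero, Finset.sum_range_succ' (fun j => Pt (m+m) x F j) m,
        Finset.sum_range_succ' (fun j => Tt (m+m) x F j) m]
    have hstep : (∑ j ∈ Finset.range m, Pt (m+m) x F (j+1))
        + ∑ j ∈ Finset.range m, Qt (m+m) x F j
        = ∑ j ∈ Finset.range m, Tt (m+m) x F (j+1) := by
      rw [← Finset.sum_add_distrib]
      refine Finset.sum_congr rfl fun j hj => ?_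
      have hj' : j < m := Finset.mem_range.mp hj
      exact (step_id (m+m) x F j (m+m-(2*j+2)) (by omega)).symm
    have h0 := zero_id (m+m) x F
    linarith [hstep, h0]
  · -- k = 2*m + 1
    subst hm
    rw [show (2*m+1) / 2 = m by omega, show (2*m+1+1) / 2 = m+1 by omega]
    rw [Finset.sum_range_succ (fun j => Qt (2*m+1) x F j) m,
        Finset.sum_range_succ' (fun j => Pt (2*m+1) x F j) m,
        Finset.sum_range_succ' (fun j => Tt (2*m+1) x F j) (m+1),
        Finset.sum_range_succ (fun j => Tt (2*m+1) x F (j+1)) m]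
    have hstep : (∑ j ∈ Finset.range m, Pt (2*m+1) x F (j+1))
        + ∑ j ∈ Finset.range m, Qt (2*m+1) x F j
        = ∑ j ∈ Finset.range m, Tt (2*m+1) x F (j+1) := by
      rw [← Finset.sum_add_distrib]
      refine Finset.sum_congr rfl fun j hj => ?_
      have hj' : j < m := Finset.mem_range.mp hj
      exact (step_id (2*m+1) x F j (2*m+1-(2*j+2)) (by omega)).symm
    have h0 := zero_id (2*m+1) x F
    have hlast : Tt (2*m+1) x F (m+1) = Qt (2*m+1) x F m := by
      unfold Tt Qt
      rw [show 2*m+1+1-2*(m+1) = 0 by omega, show 2*m+1+1-(m+1) = m+1 by omega,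
          show 2*m+1-2*m-1 = 0 by omega, show 2*m+1-2*m = 1 by omega,
          show 2*m+1-m = m+1 by omega, show 2*m+1+1 = 2*m+2 by omega]
      simp only [Nat.factorial_zero, Nat.factorial_one, Nat.cast_one, mul_one, pow_zero, one_mul]
      linear_combination (coeff_id2 m) * F (m+1)
    linarith [hstep, h0, hlast]

private lemma aux_main : ∀ (k : ℕ) (f : ℝ → ℝ), ContDiff ℝ k f → ∀ x : ℝ,
    iteratedDeriv k (fun y => f (y ^ 2)) x =
      ∑ j ∈ Finset.range (k / 2 + 1),
        ((k.factorial : ℝ) / ((j.factorial : ℝ) * ((k - 2 * j).factorial : ℝ))) *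
          (2 * x) ^ (k - 2 * j) * iteratedDeriv (k - j) f (x ^ 2) := by
  intro k
  induction k with
  | zero => intro f hf x; simp
  | succ k ih =>
    intro f hf x
    have hfk : ContDiff ℝ k f := hf.of_le (by exact_mod_cast Nat.le_succ k)
    have hfun : iteratedDeriv k (fun y => f (y ^ 2)) = fun x : ℝ =>
        ∑ j ∈ Finset.range (k / 2 + 1),
          ((k.factorial : ℝ) / ((j.factorial : ℝ) * ((k - 2 * j).factorial : ℝ))) *
            (2 * x) ^ (k - 2 * j) * iteratedDeriv (k - j) f (x ^ 2) :=
      funext (ih f hfk)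
    have hterm : ∀ j ∈ Finset.range (k / 2 + 1),
        HasDerivAt (fun x : ℝ =>
          ((k.factorial : ℝ) / ((j.factorial : ℝ) * ((k - 2 * j).factorial : ℝ))) *
            ((2 * x) ^ (k - 2 * j) * iteratedDeriv (k - j) f (x ^ 2)))
          (((k.factorial : ℝ) / ((j.factorial : ℝ) * ((k - 2 * j).factorial : ℝ))) *
            ((((k - 2 * j : ℕ) : ℝ) * (2 * x) ^ (k - 2 * j - 1) * 2) *
                iteratedDeriv (k - j) f (x ^ 2) +
              (2 * x) ^ (k - 2 * j) * (iteratedDeriv (k - j + 1) f (x ^ 2) * (2 * x)))) x := by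
      intro j hj
      have hd : Differentiable ℝ (iteratedDeriv (k - j) f) :=
        hf.differentiable_iteratedDeriv _ (by exact_mod_cast (show k - j < k + 1 by omega))
      have h2 : HasDerivAt (iteratedDeriv (k - j) f)
          (iteratedDeriv (k - j + 1) f (x ^ 2)) (x ^ 2) := by
        rw [iteratedDeriv_succ]
        exact (hd (x ^ 2)).hasDerivAt
      have hsq : HasDerivAt (fun y : ℝ => y ^ 2) (2 * x) x := by
        simpa using hasDerivAt_pow 2 x
      have hcomp : HasDerivAt (fun x : ℝ => iteratedDeriv (k - j) f (x ^ 2))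
          (iteratedDeriv (k - j + 1) f (x ^ 2) * (2 * x)) x := by
        exact HasDerivAt.comp (h₂ := iteratedDeriv (k - j) f) (h := fun y : ℝ => y ^ 2) x h2 hsq
      have hlin : HasDerivAt (fun x : ℝ => 2 * x) 2 x := by
        simpa using (hasDerivAt_id x).const_mul (2 : ℝ)
      have hpow : HasDerivAt (fun x : ℝ => (2 * x) ^ (k - 2 * j))
          (((k - 2 * j : ℕ) : ℝ) * (2 * x) ^ (k - 2 * j - 1) * 2) x := by
        exact HasDerivAt.comp (h₂ := fun y : ℝ => y ^ (k - 2 * j)) (h := fun y : ℝ => 2 * y) x (hasDerivAt_pow (k - 2 * j) (2 * x)) hlin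
      exact (hpow.mul hcomp).const_mul _
    have h1 := HasDerivAt.fun_sum hterm
    have h2 : (fun x : ℝ => ∑ j ∈ Finset.range (k / 2 + 1),
        ((k.factorial : ℝ) / ((j.factorial : ℝ) * ((k - 2 * j).factorial : ℝ))) *
          (2 * x) ^ (k - 2 * j) * iteratedDeriv (k - j) f (x ^ 2))
        = (fun x : ℝ => ∑ j ∈ Finset.range (k / 2 + 1),
        ((k.factorial : ℝ) / ((j.factorial : ℝ) * ((k - 2 * j).factorial : ℝ))) *
          ((2 * x) ^ (k - 2 * j) * iteratedDeriv (k - j) f (x ^ 2))) := by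
      funext y
      exact Finset.sum_congr rfl fun j _ => mul_assoc _ _ _
    rw [iteratedDeriv_succ, hfun, h2]
    exact h1.deriv.trans (sum_identity k x (fun m => iteratedDeriv m f (x ^ 2)))

theorem statement_1 (k : ℕ) (f : ℝ → ℝ) (hf : ContDiff ℝ k f) (x : ℝ) :
    iteratedDeriv k (fun y => f (y ^ 2)) x =
      ∑ j ∈ Finset.range (k / 2 + 1),
        ((k.factorial : ℝ) / ((j.factorial : ℝ) * ((k - 2 * j).factorial : ℝ))) *
          (2 * x) ^ (k - 2 * j) * iteratedDeriv (k - j) f (x ^ 2) := by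
  exact aux_main k f hf x
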